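/- Conversely, let R be an operator on H ⊗ H with R = R†, R ≥ 0 and tr_V(R) = 𝟙 on the second factor. Then the map E(ρ) = tr_{V'}((𝟙 ⊗ ρᵀ) R), where the transpose is taken in the computational basis and tr_{V'} is the partial trace over the second factor, is a completely positive trace-preserving map whose Choi–Jamiolkowski operator is R. -/

import Mathlib

open scoped Kronecker ComplexOrder

/-- Partial trace over the second tensor factor. -/
noncomputable def ptraceR {m k : Type*} [Fintype m] [Fintype k]
    (ρ : Matrix (m × k) (m × k) ℂ) : Matrix m m ℂ :=
  Matrix.of fun i j => ∑ x, ρ (i, x) (j, x)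

/-- Partial trace over the first tensor factor. -/
noncomputable def ptraceL {m k : Type*} [Fintype m] [Fintype k]
    (ρ : Matrix (m × k) (m × k) ℂ) : Matrix k k ℂ :=
  Matrix.of fun i j => ∑ x, ρ (x, i) (x, j)

/-- A map on matrices is linear. -/
def IsLinearMatMap {n m : Type*} (E : Matrix n n ℂ → Matrix m m ℂ) : Prop :=
  ∀ (a b : ℂ) (X Y : Matrix n n ℂ), E (a • X + b • Y) = a • E X + b • E Y

/-- The extension `id_k ⊗ E` of a map on matrices, acting blockwise. -/
noncomputable def mapExt {n : Type*} [Fintype n] (k : ℕ)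
    (E : Matrix n n ℂ → Matrix n n ℂ)
    (ρ : Matrix (Fin k × n) (Fin k × n) ℂ) : Matrix (Fin k × n) (Fin k × n) ℂ :=
  Matrix.of fun p q => E (Matrix.of fun a b => ρ (p.1, a) (q.1, b)) p.2 q.2

/-- Complete positivity: all the extensions `id_k ⊗ E` are positive maps. -/
def IsCompletelyPositive {n : Type*} [Fintype n]
    (E : Matrix n n ℂ → Matrix n n ℂ) : Prop :=
  ∀ (k : ℕ) (ρ : Matrix (Fin k × n) (Fin k × n) ℂ), ρ.PosSemidef → (mapExt k E ρ).PosSemidef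

/-- Trace preservation. -/
def IsTracePreserving {n : Type*} [Fintype n] (E : Matrix n n ℂ → Matrix n n ℂ) : Prop :=
  ∀ ρ : Matrix n n ℂ, (E ρ).trace = ρ.trace

/-- The unnormalized maximally entangled state |Φ⟩⟨Φ|, with |Φ⟩ = Σ_s |s⟩⊗|s⟩. -/
noncomputable def PhiM (n : Type*) [DecidableEq n] : Matrix (n × n) (n × n) ℂ :=
  Matrix.of fun p q => if p.1 = p.2 ∧ q.1 = q.2 then 1 else 0

/-- The map `E ⊗ id` acting on operators of `H ⊗ H` (E on the first factor). -/
noncomputable def chanTensorId {n : Type*} [Fintype n]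
    (E : Matrix n n ℂ → Matrix n n ℂ)
    (M : Matrix (n × n) (n × n) ℂ) : Matrix (n × n) (n × n) ℂ :=
  Matrix.of fun p q => E (Matrix.of fun a b => M (a, p.2) (b, q.2)) p.1 q.1

/-- The map `ρ ↦ tr_{V'}((𝟙 ⊗ ρᵀ) R)` built from a Choi–Jamiolkowski operator. -/
noncomputable def choiMap {n : Type*} [Fintype n]
    (R : Matrix (n × n) (n × n) ℂ) : Matrix n n ℂ → Matrix n n ℂ :=
  fun ρ => Matrix.of fun i j => ∑ k, ∑ q, ρ q k * R (i, q) (j, k)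

private lemma sum_rev4 {α β γ δ : Type*} [Fintype α] [Fintype β] [Fintype γ] [Fintype δ]
    (f : α → β → γ → δ → ℂ) :
    ∑ a, ∑ b, ∑ c, ∑ d, f a b c d = ∑ d, ∑ c, ∑ b, ∑ a, f a b c d := by
  conv_lhs => enter [2, a, 2, b]; rw [Finset.sum_comm]
  conv_lhs => enter [2, a]; rw [Finset.sum_comm]
  conv_lhs => rw [Finset.sum_comm]
  conv_lhs => enter [2, d, 2, a]; rw [Finset.sum_comm]
  conv_lhs => enter [2, d]; rw [Finset.sum_comm]
  conv_lhs => enter [2, d, 2, c]; rw [Finset.sum_comm]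

open scoped MatrixOrder in
private lemma psd_exists_conjTranspose_mul_self {m : Type*} [Fintype m] [DecidableEq m]
    {A : Matrix m m ℂ} (hA : A.PosSemidef) : ∃ B : Matrix m m ℂ, A = B.conjTranspose * B := by
  obtain ⟨X, hX, -, h⟩ :=
    CFC.exists_sqrt_of_isSelfAdjoint_of_quasispectrumRestricts hA.isHermitian
      (QuasispectrumRestricts.nnreal_of_nonneg hA.nonneg)
  exact ⟨X, by rw [← h]; nth_rewrite 1 [← hX.star_eq]; rfl⟩

/-- An operator `R` with `R = R†`, `R ≥ 0`, `tr_V R = 𝟙` defines a CPTP map whose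
Choi–Jamiolkowski operator is `R`. -/
theorem stmt_4 {n : Type*} [Fintype n] [DecidableEq n]
    (R : Matrix (n × n) (n × n) ℂ)
    (hH : R.IsHermitian) (hpos : R.PosSemidef) (hptr : ptraceL R = 1) :
    IsLinearMatMap (choiMap R) ∧ IsCompletelyPositive (choiMap R) ∧
      IsTracePreserving (choiMap R) ∧ chanTensorId (choiMap R) (PhiM n) = R := by
  refine ⟨?_, ?_, ?_, ?_⟩
  · -- linearity
    intro a b X Y
    ext i j
    simp [choiMap, Matrix.add_apply, Matrix.smul_apply, smul_eq_mul, add_mul,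
      Finset.sum_add_distrib, Finset.mul_sum, mul_assoc]
  · -- complete positivity
    intro k ρ hρ
    obtain ⟨C, hC⟩ := psd_exists_conjTranspose_mul_self hpos
    obtain ⟨D, hD⟩ := psd_exists_conjTranspose_mul_self hρ
    set V : Matrix ((n × n) × (Fin k × n)) (Fin k × n) ℂ :=
      Matrix.of (fun u p => ∑ t, D u.2 (p.1, t) * C u.1 (p.2, t)) with hV
    have key : mapExt k (choiMap R) ρ = V.conjTranspose * V := by
      ext ⟨a, i⟩ ⟨b, j⟩
      show (∑ w, ∑ t, ρ (a, t) (b, w) * R (i, t) (j, w))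
          = ∑ u' : (n × n) × (Fin k × n), star (V u' (a, i)) * V u' (b, j)
      calc (∑ w, ∑ t, ρ (a, t) (b, w) * R (i, t) (j, w))
          = ∑ w, ∑ t, ∑ u, ∑ s, (star (D u (a, t)) * star (C s (i, t)))
              * (D u (b, w) * C s (j, w)) := by
            refine Finset.sum_congr rfl fun w _ => Finset.sum_congr rfl fun t _ => ?_
            rw [hC, hD]
            simp only [Matrix.mul_apply, Matrix.conjTranspose_apply, Finset.sum_mul_sum]
            refine Finset.sum_congr rfl fun u _ => Finset.sum_congr rfl fun s _ => ?_
            ring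
        _ = ∑ s, ∑ u, ∑ t, ∑ w, (star (D u (a, t)) * star (C s (i, t)))
              * (D u (b, w) * C s (j, w)) := sum_rev4 _
        _ = ∑ u' : (n × n) × (Fin k × n), star (V u' (a, i)) * V u' (b, j) := by
            conv_rhs => rw [Fintype.sum_prod_type]
            refine Finset.sum_congr rfl fun s _ => Finset.sum_congr rfl fun u _ => ?_
            simp only [hV, Matrix.of_apply, star_sum, star_mul', Finset.sum_mul_sum]
    rw [key]
    exact Matrix.posSemidef_conjTranspose_mul_self V
  · -- trace preservation
    intro ρ
    have h1 : ∀ q k : n, (∑ i, R (i, q) (i, k)) = if q = k then 1 else 0 := by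
      intro q k
      have := congrArg (fun M => M q k) hptr
      simpa [ptraceL, Matrix.one_apply] using this
    simp only [Matrix.trace, Matrix.diag, choiMap, Matrix.of_apply]
    rw [Finset.sum_comm]
    rw [show (∑ k : n, ∑ i : n, ∑ q : n, ρ q k * R (i, q) (i, k))
        = ∑ k : n, ∑ q : n, ∑ i : n, ρ q k * R (i, q) (i, k) from
      Finset.sum_congr rfl fun k _ => Finset.sum_comm ..]
    calc (∑ k : n, ∑ q : n, ∑ i : n, ρ q k * R (i, q) (i, k))
        = ∑ k : n, ∑ q : n, ρ q k * ∑ i, R (i, q) (i, k) := by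
          simp [Finset.mul_sum]
      _ = ∑ k : n, ρ k k := by
          simp [h1, mul_ite, Finset.sum_ite_eq]
      _ = ρ.trace := rfl
  · -- Choi operator is R
    ext ⟨i, q⟩ ⟨j, t⟩
    simp [chanTensorId, choiMap, PhiM, ite_and, Finset.sum_ite_eq, Finset.sum_ite_eq']
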